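/- For every nonzero real number a, the map L̃ of Theorem 6.1 satisfies the PDE system ∂²L̃/∂x² = (i/a³)·∂L̃/∂y, ∂²L̃/∂x∂y = L̃, and ∂²L̃/∂y² = −i·a³·∂L̃/∂x at every point of ℝ². (The middle equation says that the mixed second derivative is purely in the position direction, which expresses minimality of the projected surface π∘L̃ in CP²₁(4).) -/

import Mathlib

open Complex

/-- The index-one Hermitian form `b(z,w) = −conj z₁ · w₁ + conj z₂ · w₂ + conj z₃ · w₃`
on `ℂ³`, over which the pseudo-sphere `S⁵₂(1) = {z : b(z,z) = 1}` and the Hopf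
fibration `π : S⁵₂(1) → CP²₁(4)` are defined. -/
noncomputable def bSph (z w : ℂ × ℂ × ℂ) : ℂ :=
  -(starRingEnd ℂ z.1) * w.1 + (starRingEnd ℂ z.2.1) * w.2.1
    + (starRingEnd ℂ z.2.2) * w.2.2

/-- The horizontal lift `L̃ : ℝ² → ℂ³` of Theorem 6.1 (the timelike first
coordinate carries the `sinh` factor). -/
noncomputable def Lcp (a x y : ℝ) : ℂ × ℂ × ℂ :=
  ((1 / Real.sqrt 3 : ℝ) : ℂ) •
    (((Real.sqrt 2 : ℝ) : ℂ) * Complex.exp (Complex.I * ((x - a ^ 2 * y : ℝ) : ℂ) / (2 * (a : ℂ)))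
        * ((Real.sinh (Real.sqrt 3 * (x + a ^ 2 * y) / (2 * a)) : ℝ) : ℂ),
     Complex.exp (Complex.I * ((a ^ 2 * y - x : ℝ) : ℂ) / (a : ℂ)),
     ((Real.sqrt 2 : ℝ) : ℂ) * Complex.exp (Complex.I * ((x - a ^ 2 * y : ℝ) : ℂ) / (2 * (a : ℂ)))
        * ((Real.cosh (Real.sqrt 3 * (x + a ^ 2 * y) / (2 * a)) : ℝ) : ℂ))

/-- A three-term sum of exponentials times constant vectors. -/
noncomputable def Fsum (p₁ q₁ p₂ q₂ p₃ q₃ : ℂ) (w₁ w₂ w₃ : ℂ × ℂ × ℂ) (x y : ℝ) : ℂ × ℂ × ℂ :=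
  Complex.exp (p₁*x + q₁*y) • w₁ + Complex.exp (p₂*x + q₂*y) • w₂ + Complex.exp (p₃*x + q₃*y) • w₃

lemma E_hasDerivAt_x (p q : ℂ) (y x : ℝ) :
    HasDerivAt (fun t : ℝ => Complex.exp (p*t + q*y)) (p * Complex.exp (p*x + q*y)) x := by
  have h : HasDerivAt (fun t : ℝ => p*(t:ℂ) + q*(y:ℂ)) p x := by
    simpa using ((Complex.ofRealCLM.hasDerivAt (x := x)).const_mul p).add_const (q*(y:ℂ))
  simpa [mul_comm] using h.cexp

lemma E_hasDerivAt_y (p q : ℂ) (x y : ℝ) :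
    HasDerivAt (fun t : ℝ => Complex.exp (p*x + q*t)) (q * Complex.exp (p*x + q*y)) y := by
  have h : HasDerivAt (fun t : ℝ => p*(x:ℂ) + q*(t:ℂ)) q y := by
    simpa using (((Complex.ofRealCLM.hasDerivAt (x := y)).const_mul q).const_add (p*(x:ℂ)))
  simpa [mul_comm] using h.cexp

lemma Fsum_deriv_x (p₁ q₁ p₂ q₂ p₃ q₃ : ℂ) (w₁ w₂ w₃ : ℂ × ℂ × ℂ) (y : ℝ) :
    deriv (fun t : ℝ => Fsum p₁ q₁ p₂ q₂ p₃ q₃ w₁ w₂ w₃ t y)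
      = fun x => Fsum p₁ q₁ p₂ q₂ p₃ q₃ (p₁ • w₁) (p₂ • w₂) (p₃ • w₃) x y := by
  funext x
  have h := (((E_hasDerivAt_x p₁ q₁ y x).smul_const w₁).add
    ((E_hasDerivAt_x p₂ q₂ y x).smul_const w₂)).add ((E_hasDerivAt_x p₃ q₃ y x).smul_const w₃)
  have h2 : HasDerivAt (fun t : ℝ => Fsum p₁ q₁ p₂ q₂ p₃ q₃ w₁ w₂ w₃ t y)
      (Fsum p₁ q₁ p₂ q₂ p₃ q₃ (p₁ • w₁) (p₂ • w₂) (p₃ • w₃) x y) x := by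
    simpa [Fsum, smul_smul, mul_comm, Pi.add_def] using h
  exact h2.deriv

lemma Fsum_deriv_y (p₁ q₁ p₂ q₂ p₃ q₃ : ℂ) (w₁ w₂ w₃ : ℂ × ℂ × ℂ) (x : ℝ) :
    deriv (fun t : ℝ => Fsum p₁ q₁ p₂ q₂ p₃ q₃ w₁ w₂ w₃ x t)
      = fun y => Fsum p₁ q₁ p₂ q₂ p₃ q₃ (q₁ • w₁) (q₂ • w₂) (q₃ • w₃) x y := by
  funext y
  have h := (((E_hasDerivAt_y p₁ q₁ x y).smul_const w₁).add
    ((E_hasDerivAt_y p₂ q₂ x y).smul_const w₂)).add ((E_hasDerivAt_y p₃ q₃ x y).smul_const w₃)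
  have h2 : HasDerivAt (fun t : ℝ => Fsum p₁ q₁ p₂ q₂ p₃ q₃ w₁ w₂ w₃ x t)
      (Fsum p₁ q₁ p₂ q₂ p₃ q₃ (q₁ • w₁) (q₂ • w₂) (q₃ • w₃) x y) y := by
    simpa [Fsum, smul_smul, mul_comm, Pi.add_def] using h
  exact h2.deriv

lemma smul_Fsum (c p₁ q₁ p₂ q₂ p₃ q₃ : ℂ) (w₁ w₂ w₃ : ℂ × ℂ × ℂ) (x y : ℝ) :
    c • Fsum p₁ q₁ p₂ q₂ p₃ q₃ w₁ w₂ w₃ x y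
      = Fsum p₁ q₁ p₂ q₂ p₃ q₃ (c • w₁) (c • w₂) (c • w₃) x y := by
  simp [Fsum, smul_add, smul_comm c]

lemma Lcp_eq_Fsum (a : ℝ) (ha : a ≠ 0) (x y : ℝ) :
    Lcp a x y =
      Fsum ((Complex.I + (Real.sqrt 3 : ℝ))/(2*(a:ℂ))) ((a:ℂ)*((Real.sqrt 3 : ℝ) - Complex.I)/2)
           ((Complex.I - (Real.sqrt 3 : ℝ))/(2*(a:ℂ))) (-(a:ℂ)*(Complex.I + (Real.sqrt 3 : ℝ))/2)
           (-Complex.I/(a:ℂ)) (Complex.I*(a:ℂ))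
           ((((Real.sqrt 2 : ℝ):ℂ)/(2*((Real.sqrt 3 : ℝ):ℂ)), 0, ((Real.sqrt 2 : ℝ):ℂ)/(2*((Real.sqrt 3 : ℝ):ℂ))))
           ((-(((Real.sqrt 2 : ℝ):ℂ)/(2*((Real.sqrt 3 : ℝ):ℂ))), 0, ((Real.sqrt 2 : ℝ):ℂ)/(2*((Real.sqrt 3 : ℝ):ℂ))))
           ((0, 1/((Real.sqrt 3 : ℝ):ℂ), 0)) x y := by
  have haC : (a:ℂ) ≠ 0 := Complex.ofReal_ne_zero.mpr ha
  set s3 : ℂ := ((Real.sqrt 3 : ℝ) : ℂ)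
  have h1 : Complex.exp ((Complex.I + s3)/(2*(a:ℂ)) * (x:ℂ) + (a:ℂ)*(s3 - Complex.I)/2 * (y:ℂ))
      = Complex.exp (Complex.I * ((x - a ^ 2 * y : ℝ) : ℂ) / (2 * (a : ℂ)))
        * Complex.exp (((Real.sqrt 3 * (x + a ^ 2 * y) / (2 * a) : ℝ) : ℂ)) := by
    rw [← Complex.exp_add]; congr 1; push_cast; field_simp; ring
  have h2 : Complex.exp ((Complex.I - s3)/(2*(a:ℂ)) * (x:ℂ) + (-(a:ℂ)*(Complex.I + s3)/2) * (y:ℂ))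
      = Complex.exp (Complex.I * ((x - a ^ 2 * y : ℝ) : ℂ) / (2 * (a : ℂ)))
        * Complex.exp (-((Real.sqrt 3 * (x + a ^ 2 * y) / (2 * a) : ℝ) : ℂ)) := by
    rw [← Complex.exp_add]; congr 1; push_cast; field_simp; ring
  have h3 : Complex.exp ((-Complex.I/(a:ℂ)) * (x:ℂ) + Complex.I*(a:ℂ) * (y:ℂ))
      = Complex.exp (Complex.I * ((a ^ 2 * y - x : ℝ) : ℂ) / (a : ℂ)) := by
    congr 1; push_cast; field_simp; ring
  simp only [Lcp, Fsum, Prod.smul_mk, Prod.mk_add_mk, smul_eq_mul, h1, h2, h3,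
    Complex.ofReal_sinh, Complex.ofReal_cosh, Complex.sinh, Complex.cosh]
  refine Prod.ext ?_ (Prod.ext ?_ ?_) <;> simp <;> ring

/-- Theorem 6.1 (PDE system (6.4)): `L̃_xx = (i/a³) L̃_y`, `L̃_xy = L̃`, and
`L̃_yy = −i a³ L̃_x`; the middle equation expresses minimality of `π ∘ L̃`
in `CP²₁(4)`. -/
theorem Lcp_pde_system (a : ℝ) (ha : a ≠ 0) :
    ∀ x y : ℝ,
      deriv (fun s => deriv (fun t => Lcp a t y) s) x
        = (Complex.I / (a : ℂ) ^ 3) • deriv (fun t => Lcp a x t) y ∧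
      deriv (fun s => deriv (fun t => Lcp a s t) y) x = Lcp a x y ∧
      deriv (fun s => deriv (fun t => Lcp a x t) s) y
        = (-(Complex.I * (a : ℂ) ^ 3)) • deriv (fun t => Lcp a t y) x := by
  intro x y
  have haC : (a:ℂ) ≠ 0 := Complex.ofReal_ne_zero.mpr ha
  set s3 : ℂ := ((Real.sqrt 3 : ℝ) : ℂ) with hs3def
  have hs3 : s3^2 = 3 := by
    rw [hs3def, ← Complex.ofReal_pow, Real.sq_sqrt (by norm_num : (0:ℝ) ≤ 3)]; norm_num
  have hI : Complex.I^2 = -1 := Complex.I_sq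
  set aC : ℂ := (a:ℂ) with haCdef
  set p₁ : ℂ := (Complex.I + s3)/(2*aC) with hp1
  set q₁ : ℂ := aC*(s3 - Complex.I)/2 with hq1
  set p₂ : ℂ := (Complex.I - s3)/(2*aC) with hp2
  set q₂ : ℂ := -aC*(Complex.I + s3)/2 with hq2
  set p₃ : ℂ := -Complex.I/aC with hp3
  set q₃ : ℂ := Complex.I*aC with hq3
  set w₁ : ℂ × ℂ × ℂ := (((Real.sqrt 2 : ℝ):ℂ)/(2*s3), 0, ((Real.sqrt 2 : ℝ):ℂ)/(2*s3)) with hw1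
  set w₂ : ℂ × ℂ × ℂ := (-(((Real.sqrt 2 : ℝ):ℂ)/(2*s3)), 0, ((Real.sqrt 2 : ℝ):ℂ)/(2*s3)) with hw2
  set w₃ : ℂ × ℂ × ℂ := ((0 : ℂ), 1/s3, (0:ℂ)) with hw3
  have e1 : p₁ * p₁ = Complex.I/aC^3 * q₁ := by
    rw [hp1, hq1]; field_simp; linear_combination hs3 + 3 * hI
  have e2 : p₂ * p₂ = Complex.I/aC^3 * q₂ := by
    rw [hp2, hq2]; field_simp; linear_combination hs3 + 3 * hI
  have e3 : p₃ * p₃ = Complex.I/aC^3 * q₃ := by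
    rw [hp3, hq3]; field_simp
  have f1 : p₁ * q₁ = 1 := by rw [hp1, hq1]; field_simp; linear_combination hs3 - hI
  have f2 : p₂ * q₂ = 1 := by rw [hp2, hq2]; field_simp; linear_combination hs3 - hI
  have f3 : p₃ * q₃ = 1 := by rw [hp3, hq3]; field_simp; linear_combination -hI
  have g1 : q₁ * q₁ = -(Complex.I*aC^3) * p₁ := by
    rw [hp1, hq1]; field_simp; linear_combination hs3 + 3 * hI
  have g2 : q₂ * q₂ = -(Complex.I*aC^3) * p₂ := by
    rw [hp2, hq2]; field_simp; linear_combination hs3 + 3 * hI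
  have g3 : q₃ * q₃ = -(Complex.I*aC^3) * p₃ := by
    rw [hp3, hq3]; field_simp
  have hL : ∀ u v : ℝ, Lcp a u v = Fsum p₁ q₁ p₂ q₂ p₃ q₃ w₁ w₂ w₃ u v := fun u v =>
    Lcp_eq_Fsum a ha u v
  refine ⟨?_, ?_, ?_⟩
  · have d1 : (fun s : ℝ => deriv (fun t => Lcp a t y) s)
        = fun s => Fsum p₁ q₁ p₂ q₂ p₃ q₃ (p₁ • w₁) (p₂ • w₂) (p₃ • w₃) s y := by
      funext s
      rw [show (fun t => Lcp a t y) = fun t => Fsum p₁ q₁ p₂ q₂ p₃ q₃ w₁ w₂ w₃ t y from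
        funext fun t => hL t y, Fsum_deriv_x]
    have d2 : deriv (fun t => Lcp a x t) y
        = Fsum p₁ q₁ p₂ q₂ p₃ q₃ (q₁ • w₁) (q₂ • w₂) (q₃ • w₃) x y := by
      rw [show (fun t => Lcp a x t) = fun t => Fsum p₁ q₁ p₂ q₂ p₃ q₃ w₁ w₂ w₃ x t from
        funext fun t => hL x t, Fsum_deriv_y]
    rw [d1, Fsum_deriv_x, d2, smul_Fsum]
    simp only [smul_smul, e1, e2, e3]
  · have d1 : (fun s : ℝ => deriv (fun t => Lcp a s t) y)
        = fun s => Fsum p₁ q₁ p₂ q₂ p₃ q₃ (q₁ • w₁) (q₂ • w₂) (q₃ • w₃) s y := by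
      funext s
      rw [show (fun t => Lcp a s t) = fun t => Fsum p₁ q₁ p₂ q₂ p₃ q₃ w₁ w₂ w₃ s t from
        funext fun t => hL s t, Fsum_deriv_y]
    rw [d1, Fsum_deriv_x, hL x y]
    simp only [smul_smul, f1, f2, f3, one_smul]
  · have d1 : (fun s : ℝ => deriv (fun t => Lcp a x t) s)
        = fun s => Fsum p₁ q₁ p₂ q₂ p₃ q₃ (q₁ • w₁) (q₂ • w₂) (q₃ • w₃) x s := by
      funext s
      rw [show (fun t => Lcp a x t) = fun t => Fsum p₁ q₁ p₂ q₂ p₃ q₃ w₁ w₂ w₃ x t from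
        funext fun t => hL x t, Fsum_deriv_y]
    have d2 : deriv (fun t => Lcp a t y) x
        = Fsum p₁ q₁ p₂ q₂ p₃ q₃ (p₁ • w₁) (p₂ • w₂) (p₃ • w₃) x y := by
      rw [show (fun t => Lcp a t y) = fun t => Fsum p₁ q₁ p₂ q₂ p₃ q₃ w₁ w₂ w₃ t y from
        funext fun t => hL t y, Fsum_deriv_x]
    rw [d1, Fsum_deriv_y, d2, smul_Fsum]
    simp only [smul_smul, g1, g2, g3]
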